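/- arXiv:1505.00156 — 2 statements merged into one kernel-verified Lean document; each statement's English description precedes it below -/
import Mathlib

section
/- Let Ω⊆ℝⁿ be an open bounded set, X = L²(Ω) (real), T>0, N a finite-dimensional subspace of X, and P:X→X the orthogonal projection onto N. Let f:[0,∞)×Ω×ℝ→ℝ be continuous satisfying conditions (a) and (d), let F be the associated Nemytskii operator, and define g:N→N by g(u) := ∫₀ᵀ P F(t,u) dt. If for every u∈N with ‖u‖=1 one has ∫₀ᵀ∫_{{u>0}} f₊(t,x)u(x) dx dt + ∫₀ᵀ∫_{{u<0}} f₋(t,x)u(x) dx dt < 0, then there exists R₀>0 such that ⟨g(u),u⟩ < 0 for every u∈N with ‖u‖≥R₀. -/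
set_option maxHeartbeats 1000000
set_option synthInstance.maxHeartbeats 400000

open MeasureTheory Set Filter Topology Bornology intervalIntegral
open scoped RealInnerProductSpace

/-- under the Landesman–Lazer type condition (LL−), the averaged
map `g(u) = ∫₀ᵀ P F(t,u) dt` satisfies `⟪g(u),u⟫ < 0` on `N` outside a large ball. -/
theorem statement15
    (n : ℕ) (Ω : Set (EuclideanSpace ℝ (Fin n)))
    (hΩo : IsOpen Ω) (hΩb : Bornology.IsBounded Ω)
    (T : ℝ) (hT : 0 < T)
    (N : Submodule ℝ (Lp ℝ 2 (volume.restrict Ω)))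
    (hNfin : FiniteDimensional ℝ ↥N)
    -- `P` is the orthogonal projection onto `N`
    (P : Lp ℝ 2 (volume.restrict Ω) →L[ℝ] Lp ℝ 2 (volume.restrict Ω))
    (hPmem : ∀ x : Lp ℝ 2 (volume.restrict Ω), P x ∈ N)
    (hPorth : ∀ x : Lp ℝ 2 (volume.restrict Ω), ∀ y ∈ N, ⟪x - P x, y⟫ = (0:ℝ))
    (f : ℝ → EuclideanSpace ℝ (Fin n) → ℝ → ℝ)
    (hfc : ContinuousOn (fun p : ℝ × EuclideanSpace ℝ (Fin n) × ℝ =>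
      f p.1 p.2.1 p.2.2) (Set.Ici (0:ℝ) ×ˢ Ω ×ˢ Set.univ))
    -- condition (a): boundedness
    (m : ℝ) (hm : 0 < m)
    (hfa : ∀ t : ℝ, 0 ≤ t → ∀ x ∈ Ω, ∀ y : ℝ, |f t x y| ≤ m)
    -- condition (d): limits at ±∞
    (fp fm : ℝ → EuclideanSpace ℝ (Fin n) → ℝ)
    (hfpc : ContinuousOn (fun p : ℝ × EuclideanSpace ℝ (Fin n) => fp p.1 p.2)
      (Set.Ici (0:ℝ) ×ˢ Ω))
    (hfmc : ContinuousOn (fun p : ℝ × EuclideanSpace ℝ (Fin n) => fm p.1 p.2)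
      (Set.Ici (0:ℝ) ×ˢ Ω))
    (hfp : ∀ t : ℝ, 0 ≤ t → ∀ x ∈ Ω,
      Filter.Tendsto (fun y => f t x y) Filter.atTop (nhds (fp t x)))
    (hfm : ∀ t : ℝ, 0 ≤ t → ∀ x ∈ Ω,
      Filter.Tendsto (fun y => f t x y) Filter.atBot (nhds (fm t x)))
    -- `F` is the Nemytskii operator associated with `f`
    (F : ℝ → Lp ℝ 2 (volume.restrict Ω) → Lp ℝ 2 (volume.restrict Ω))
    (hF : ∀ t : ℝ, 0 ≤ t → ∀ u : Lp ℝ 2 (volume.restrict Ω),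
      ∀ᵐ x ∂(volume.restrict Ω), F t u x = f t x (u x))
    -- Landesman–Lazer type condition (LL−)
    (hLL : ∀ u : Lp ℝ 2 (volume.restrict Ω), u ∈ N → ‖u‖ = 1 →
      (∫ t in (0:ℝ)..T, ∫ x in {x | 0 < u x}, fp t x * u x ∂(volume.restrict Ω)) +
        (∫ t in (0:ℝ)..T, ∫ x in {x | u x < 0}, fm t x * u x ∂(volume.restrict Ω)) < 0) :
    ∃ R₀ : ℝ, 0 < R₀ ∧
      ∀ u : Lp ℝ 2 (volume.restrict Ω), u ∈ N → R₀ ≤ ‖u‖ →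
        ⟪∫ t in (0:ℝ)..T, P (F t u), u⟫ < 0 := by
  classical
  haveI hμfin : IsFiniteMeasure (volume.restrict Ω : Measure (EuclideanSpace ℝ (Fin n))) := by
    constructor
    rw [Measure.restrict_apply_univ]
    exact hΩb.measure_lt_top
  set V : ℝ := ((volume : Measure (EuclideanSpace ℝ (Fin n))) Ω).toReal with hVdef
  have hV0 : 0 ≤ V := ENNReal.toReal_nonneg
  have hμuniv : ((volume.restrict Ω : Measure (EuclideanSpace ℝ (Fin n))) Set.univ).toReal = V := by
    rw [Measure.restrict_apply_univ]
  have haeΩ : ∀ᵐ x ∂(volume.restrict Ω), x ∈ Ω := ae_restrict_mem hΩo.measurableSet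
  -- inner product formula in L²
  have hinner : ∀ v w : Lp ℝ 2 (volume.restrict Ω), ⟪v, w⟫ = ∫ x, v x * w x ∂(volume.restrict Ω) := by
    intro v w
    rw [L2.inner_def]
    simp [RCLike.inner_apply]
    exact integral_congr_ae (Eventually.of_forall fun x => mul_comm _ _)
  -- measurability of the substituted function
  have hmeasF : ∀ t : ℝ, 0 ≤ t → ∀ u : Lp ℝ 2 (volume.restrict Ω),
      AEStronglyMeasurable (fun x => f t x (u x)) (volume.restrict Ω) := by
    intro t ht u
    exact (Lp.aestronglyMeasurable (F t u)).congr (hF t ht u)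
  -- bound on `fp`, `fm`
  have hfpb : ∀ t : ℝ, 0 ≤ t → ∀ x ∈ Ω, |fp t x| ≤ m := by
    intro t ht x hx
    refine le_of_tendsto ((hfp t ht x hx).abs) ?_
    filter_upwards with y using hfa t ht x hx y
  have hfmb : ∀ t : ℝ, 0 ≤ t → ∀ x ∈ Ω, |fm t x| ≤ m := by
    intro t ht x hx
    refine le_of_tendsto ((hfm t ht x hx).abs) ?_
    filter_upwards with y using hfa t ht x hx y
  -- continuity in t of f for fixed x, y
  have hfct : ∀ x ∈ Ω, ∀ y : ℝ, ContinuousOn (fun t => f t x y) (Set.Ici 0) := by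
    intro x hx y
    have : (fun t => f t x y)
        = (fun p : ℝ × EuclideanSpace ℝ (Fin n) × ℝ => f p.1 p.2.1 p.2.2)
          ∘ (fun t => (t, x, y)) := rfl
    rw [this]
    exact hfc.comp ((Continuous.prodMk_left (x, y)).continuousOn)
      (fun t ht => ⟨ht, hx, mem_univ y⟩)
  -- norm bound for F
  have hFnorm : ∀ t : ℝ, 0 ≤ t → ∀ u : Lp ℝ 2 (volume.restrict Ω), ‖F t u‖ ≤ m * Real.sqrt V := by
    intro t ht u
    have hint1 : Integrable (fun x => (F t u) x * (F t u) x) (volume.restrict Ω) := by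
      have := L2.integrable_inner (𝕜 := ℝ) (F t u) (F t u)
      simpa [RCLike.inner_apply, pow_two] using this
    have h2 : ‖F t u‖ ^ 2 = ∫ x, (F t u) x * (F t u) x ∂(volume.restrict Ω) := by
      rw [← real_inner_self_eq_norm_sq, hinner]
    have hile : ∫ x, (F t u) x * (F t u) x ∂(volume.restrict Ω)
        ≤ ∫ _x, m ^ 2 ∂(volume.restrict Ω) := by
      apply integral_mono_ae hint1 (integrable_const _)
      filter_upwards [hF t ht u, haeΩ] with x hx hΩx
      rw [hx]
      have h1 := hfa t ht x hΩx (u x)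
      nlinarith [abs_nonneg (f t x (u x)), le_abs_self (f t x (u x)),
        neg_abs_le (f t x (u x))]
    have hconst : ∫ _x, m ^ 2 ∂(volume.restrict Ω) = m ^ 2 * V := by
      rw [MeasureTheory.integral_const]
      show ((volume.restrict Ω : Measure _) univ).toReal • m ^ 2 = m ^ 2 * V
      rw [hμuniv, smul_eq_mul, mul_comm]
    have hsq : ‖F t u‖ ^ 2 ≤ m ^ 2 * V := by rw [h2]; rw [hconst] at hile; exact hile
    have := Real.sqrt_le_sqrt hsq
    rwa [Real.sqrt_sq (norm_nonneg _), Real.sqrt_mul (sq_nonneg m), Real.sqrt_sq hm.le] at this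
  -- continuity of t ↦ F t u
  have hFcont : ∀ u : Lp ℝ 2 (volume.restrict Ω), ContinuousOn (fun t => F t u) (Set.Ici 0) := by
    intro u t₀ ht₀
    rw [ContinuousWithinAt, tendsto_iff_seq_tendsto]
    intro ts hts
    have htmem : ∀ᶠ k in atTop, ts k ∈ Set.Ici (0:ℝ) :=
      hts.eventually eventually_mem_nhdsWithin
    have hq : Tendsto (fun k => ∫ x, (f (ts k) x (u x) - f t₀ x (u x)) *
        (f (ts k) x (u x) - f t₀ x (u x)) ∂(volume.restrict Ω)) atTop
        (𝓝 (∫ _x, (0:ℝ) ∂(volume.restrict Ω))) := by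
      apply MeasureTheory.tendsto_integral_filter_of_dominated_convergence (fun _ => (2*m)*(2*m))
      · filter_upwards [htmem] with k hk
        exact ((hmeasF _ hk u).sub (hmeasF _ ht₀ u)).mul
          ((hmeasF _ hk u).sub (hmeasF _ ht₀ u))
      · filter_upwards [htmem] with k hk
        filter_upwards [haeΩ] with x hx
        have h1 := hfa _ hk x hx (u x)
        have h2 := hfa _ ht₀ x hx (u x)
        have habs : |f (ts k) x (u x) - f t₀ x (u x)| ≤ 2*m := by
          calc |f (ts k) x (u x) - f t₀ x (u x)|
              ≤ |f (ts k) x (u x)| + |f t₀ x (u x)| := abs_sub _ _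
            _ ≤ 2 * m := by linarith
        calc ‖(f (ts k) x (u x) - f t₀ x (u x)) * (f (ts k) x (u x) - f t₀ x (u x))‖
            = |f (ts k) x (u x) - f t₀ x (u x)| * |f (ts k) x (u x) - f t₀ x (u x)| := by
              rw [Real.norm_eq_abs, abs_mul]
          _ ≤ (2*m) * (2*m) :=
              mul_le_mul habs habs (abs_nonneg _) (by linarith)
      · exact integrable_const _
      · filter_upwards [haeΩ] with x hx
        have hc : ContinuousWithinAt (fun t => f t x (u x)) (Set.Ici 0) t₀ :=
          (hfct x hx (u x)) t₀ ht₀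
        have h3 : Tendsto (fun k => f (ts k) x (u x)) atTop (𝓝 (f t₀ x (u x))) :=
          hc.tendsto.comp hts
        have h4 := h3.sub (tendsto_const_nhds (x := f t₀ x (u x)))
        simpa using h4.mul h4
    rw [MeasureTheory.integral_zero] at hq
    have hnorm_eq : ∀ᶠ k in atTop, ‖F (ts k) u - F t₀ u‖ ^ 2
        = ∫ x, (f (ts k) x (u x) - f t₀ x (u x)) *
            (f (ts k) x (u x) - f t₀ x (u x)) ∂(volume.restrict Ω) := by
      filter_upwards [htmem] with k hk
      rw [← real_inner_self_eq_norm_sq, hinner]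
      apply MeasureTheory.integral_congr_ae
      filter_upwards [hF _ hk u, hF _ ht₀ u, Lp.coeFn_sub (F (ts k) u) (F t₀ u)]
        with x h1 h2 h3
      rw [h3]; simp only [Pi.sub_apply]; rw [h1, h2]
    have hsq : Tendsto (fun k => ‖F (ts k) u - F t₀ u‖ ^ 2) atTop (𝓝 0) :=
      hq.congr' (hnorm_eq.mono fun k hk => hk.symm)
    have hnn : Tendsto (fun k => ‖F (ts k) u - F t₀ u‖) atTop (𝓝 0) := by
      have h5 := (Real.continuous_sqrt.tendsto 0).comp hsq
      simp only [Function.comp_def, Real.sqrt_zero] at h5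
      refine h5.congr fun k => ?_
      exact Real.sqrt_sq (norm_nonneg _)
    have := tendsto_iff_norm_sub_tendsto_zero.mpr hnn
    exact this
  -- integrability of t ↦ P (F t u)
  have hPFint : ∀ u : Lp ℝ 2 (volume.restrict Ω), IntervalIntegrable (fun t => P (F t u)) volume 0 T := by
    intro u
    apply ContinuousOn.intervalIntegrable
    apply P.continuous.comp_continuousOn
    exact (hFcont u).mono (by rw [uIcc_of_le hT.le]; exact Icc_subset_Ici_self)
  have hFinnerContOn : ∀ u w : Lp ℝ 2 (volume.restrict Ω), ContinuousOn (fun t => ⟪F t u, w⟫) (Set.Ici 0) := by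
    intro u w
    have : (fun t => ⟪F t u, w⟫) = (fun z : Lp ℝ 2 (volume.restrict Ω) => ⟪z, w⟫) ∘ (fun t => F t u) := rfl
    rw [this]
    exact (continuous_inner.comp (continuous_id.prodMk continuous_const)).comp_continuousOn
      (hFcont u)
  have hFinnerInt : ∀ u w : Lp ℝ 2 (volume.restrict Ω), IntervalIntegrable (fun t => ⟪F t u, w⟫) volume 0 T := by
    intro u w
    apply ContinuousOn.intervalIntegrable
    exact (hFinnerContOn u w).mono (by rw [uIcc_of_le hT.le]; exact Icc_subset_Ici_self)
  -- key formula
  have key : ∀ u : Lp ℝ 2 (volume.restrict Ω), u ∈ N →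
      ⟪∫ t in (0:ℝ)..T, P (F t u), u⟫ = ∫ t in (0:ℝ)..T, ⟪F t u, u⟫ := by
    intro u hu
    calc ⟪∫ t in (0:ℝ)..T, P (F t u), u⟫
        = ⟪u, ∫ t in (0:ℝ)..T, P (F t u)⟫ := real_inner_comm _ _
      _ = (innerSL ℝ u) (∫ t in (0:ℝ)..T, P (F t u)) := rfl
      _ = ∫ t in (0:ℝ)..T, (innerSL ℝ u) (P (F t u)) :=
          ((innerSL ℝ u).intervalIntegral_comp_comm (hPFint u)).symm
      _ = ∫ t in (0:ℝ)..T, ⟪F t u, u⟫ := by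
          apply intervalIntegral.integral_congr
          intro t _
          show ⟪u, P (F t u)⟫ = ⟪F t u, u⟫
          have h0 := hPorth (F t u) u hu
          rw [inner_sub_left] at h0
          rw [real_inner_comm]
          linarith
  -- proof by contradiction
  by_contra hcon
  push_neg at hcon
  choose uu huN hunorm hupos using fun k : ℕ => hcon ((k:ℝ)+1) (by positivity)
  have hupos' : ∀ k, 0 < ‖uu k‖ := fun k => lt_of_lt_of_le (by positivity) (hunorm k)
  set vv : ℕ → Lp ℝ 2 (volume.restrict Ω) := fun k => (‖uu k‖)⁻¹ • uu k with hvvdef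
  have hvmem : ∀ k, vv k ∈ N := fun k => N.smul_mem _ (huN k)
  have hvnorm : ∀ k, ‖vv k‖ = 1 := by
    intro k
    rw [hvvdef]
    simp only [norm_smul, norm_inv, norm_norm]
    exact inv_mul_cancel₀ (hupos' k).ne'
  set J : ℕ → ℝ := fun k => ∫ t in (0:ℝ)..T, ⟪F t (uu k), vv k⟫ with hJdef
  have hJnn : ∀ k, 0 ≤ J k := by
    intro k
    have h1 : ∀ t : ℝ, ⟪F t (uu k), vv k⟫ = ‖uu k‖⁻¹ * ⟪F t (uu k), uu k⟫ := by
      intro t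
      rw [hvvdef]
      exact real_inner_smul_right _ _ _
    have h2 : J k = ‖uu k‖⁻¹ * ∫ t in (0:ℝ)..T, ⟪F t (uu k), uu k⟫ := by
      rw [hJdef]
      simp only [h1]
      exact intervalIntegral.integral_const_mul _ _
    rw [h2, ← key (uu k) (huN k)]
    exact mul_nonneg (inv_nonneg.2 (norm_nonneg _)) (hupos k)
  -- compactness of the unit sphere of N
  haveI : ProperSpace ↥N := FiniteDimensional.proper ℝ ↥N
  have hw_sphere : ∀ k, (⟨vv k, hvmem k⟩ : ↥N) ∈ Metric.sphere (0:↥N) 1 := by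
    intro k
    rw [mem_sphere_zero_iff_norm]
    exact hvnorm k
  obtain ⟨w0, hw0, φ, hφ, hφt⟩ :=
    (isCompact_sphere (0:↥N) 1).tendsto_subseq hw_sphere
  have hLpφ : Tendsto (fun k => vv (φ k)) atTop (𝓝 (w0 : Lp ℝ 2 (volume.restrict Ω))) :=
    ((continuous_subtype_val.tendsto w0).comp hφt : _)
  haveI : Fact ((1:ENNReal) ≤ 2) := ⟨one_le_two⟩
  obtain ⟨ψ, hψ, hae⟩ :=
    (MeasureTheory.tendstoInMeasure_of_tendsto_Lp hLpφ).exists_seq_tendsto_ae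
  set σ : ℕ → ℕ := φ ∘ ψ with hσdef
  set vL : Lp ℝ 2 (volume.restrict Ω) := (w0 : Lp ℝ 2 (volume.restrict Ω)) with hvLdef
  have hvLN : vL ∈ N := w0.2
  have hvLn : ‖vL‖ = 1 := by
    have := mem_sphere_zero_iff_norm.mp hw0
    exact this
  have hLpσ : Tendsto (fun k => vv (σ k)) atTop (𝓝 vL) := hLpφ.comp hψ.tendsto_atTop
  have hUt : Tendsto (fun k => ‖uu (σ k)‖) atTop atTop := by
    have hbase : Tendsto (fun k : ℕ => (k:ℝ) + 1) atTop atTop :=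
      tendsto_atTop_add_const_right _ 1 tendsto_natCast_atTop_atTop
    refine tendsto_atTop_mono (fun k => ?_) hbase
    calc ((k:ℝ) + 1) ≤ (σ k : ℝ) + 1 := by
          have hk : k ≤ σ k := (hφ.comp hψ).le_apply
          have : (k:ℝ) ≤ (σ k : ℝ) := Nat.cast_le.mpr hk
          linarith
      _ ≤ ‖uu (σ k)‖ := hunorm (σ k)
  have haeU : ∀ᵐ x ∂(volume.restrict Ω), ∀ k, uu (σ k) x = ‖uu (σ k)‖ * vv (σ k) x := by
    rw [MeasureTheory.ae_all_iff]
    intro k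
    filter_upwards [Lp.coeFn_smul (‖uu (σ k)‖⁻¹ : ℝ) (uu (σ k))] with x hx
    have : vv (σ k) x = ‖uu (σ k)‖⁻¹ * uu (σ k) x := by
      rw [hvvdef]; rw [hx]; simp
    rw [this, ← mul_assoc, mul_inv_cancel₀ (hupos' (σ k)).ne', one_mul]
  -- measurable sets, integrability of vL
  have hS1 : MeasurableSet {x | 0 < vL x} := by
    exact measurableSet_lt measurable_const (Lp.stronglyMeasurable vL).measurable
  have hS2 : MeasurableSet {x | vL x < 0} := by
    exact measurableSet_lt (Lp.stronglyMeasurable vL).measurable measurable_const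
  have hvint : Integrable (⇑vL) (volume.restrict Ω) := (Lp.memLp vL).integrable one_le_two
  have hbint : Integrable (fun x => m * |vL x|) (volume.restrict Ω) := hvint.abs.const_mul m
  -- the limit functions
  obtain ⟨A, hAdef⟩ : ∃ A : ℝ → ℝ,
      A = fun t => ∫ x in {x | 0 < vL x}, fp t x * vL x ∂(volume.restrict Ω) := ⟨_, rfl⟩
  obtain ⟨B, hBdef⟩ : ∃ B : ℝ → ℝ,
      B = fun t => ∫ x in {x | vL x < 0}, fm t x * vL x ∂(volume.restrict Ω) := ⟨_, rfl⟩
  -- continuity/measurability/integrability facts for fp, fm against vL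
  have hfpcontx : ∀ t : ℝ, 0 ≤ t → ContinuousOn (fun x => fp t x) Ω := by
    intro t ht
    exact hfpc.comp (Continuous.prodMk_right t).continuousOn (fun x hx => ⟨ht, hx⟩)
  have hfmcontx : ∀ t : ℝ, 0 ≤ t → ContinuousOn (fun x => fm t x) Ω := by
    intro t ht
    exact hfmc.comp (Continuous.prodMk_right t).continuousOn (fun x hx => ⟨ht, hx⟩)
  have hfpcontt : ∀ x ∈ Ω, ContinuousOn (fun t => fp t x) (Set.Ici 0) := by
    intro x hx
    exact hfpc.comp (Continuous.prodMk_left x).continuousOn (fun t ht => ⟨ht, hx⟩)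
  have hfmcontt : ∀ x ∈ Ω, ContinuousOn (fun t => fm t x) (Set.Ici 0) := by
    intro x hx
    exact hfmc.comp (Continuous.prodMk_left x).continuousOn (fun t ht => ⟨ht, hx⟩)
  have hfpmeas : ∀ t : ℝ, 0 ≤ t →
      AEStronglyMeasurable (fun x => fp t x * vL x) (volume.restrict Ω) := by
    intro t ht
    exact ((hfpcontx t ht).aestronglyMeasurable hΩo.measurableSet).mul
      (Lp.aestronglyMeasurable vL)
  have hfmmeas : ∀ t : ℝ, 0 ≤ t →
      AEStronglyMeasurable (fun x => fm t x * vL x) (volume.restrict Ω) := by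
    intro t ht
    exact ((hfmcontx t ht).aestronglyMeasurable hΩo.measurableSet).mul
      (Lp.aestronglyMeasurable vL)
  have hfpint : ∀ t : ℝ, 0 ≤ t →
      Integrable (fun x => fp t x * vL x) (volume.restrict Ω) := by
    intro t ht
    apply hbint.mono' (hfpmeas t ht)
    filter_upwards [haeΩ] with x hx
    rw [Real.norm_eq_abs, abs_mul]
    exact mul_le_mul_of_nonneg_right (hfpb t ht x hx) (abs_nonneg _)
  have hfmint : ∀ t : ℝ, 0 ≤ t →
      Integrable (fun x => fm t x * vL x) (volume.restrict Ω) := by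
    intro t ht
    apply hbint.mono' (hfmmeas t ht)
    filter_upwards [haeΩ] with x hx
    rw [Real.norm_eq_abs, abs_mul]
    exact mul_le_mul_of_nonneg_right (hfmb t ht x hx) (abs_nonneg _)
  have hAint : IntervalIntegrable A volume 0 T := by
    have hAeq : A = fun t => ∫ x, Set.indicator {x | 0 < vL x}
        (fun x => fp t x * vL x) x ∂(volume.restrict Ω) := by
      funext t
      rw [hAdef]
      exact (MeasureTheory.integral_indicator hS1).symm
    have hAcont : ContinuousOn A (Set.Ici 0) := by
      rw [hAeq]
      apply MeasureTheory.continuousOn_of_dominated (bound := fun x => m * |vL x|)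
      · intro t ht
        exact (hfpmeas t ht).indicator hS1
      · intro t ht
        filter_upwards [haeΩ] with x hx
        calc ‖Set.indicator {x | 0 < vL x} (fun x => fp t x * vL x) x‖
            ≤ ‖fp t x * vL x‖ := norm_indicator_le_norm_self _ _
          _ ≤ m * |vL x| := by
              rw [Real.norm_eq_abs, abs_mul]
              exact mul_le_mul_of_nonneg_right (hfpb t ht x hx) (abs_nonneg _)
      · exact hbint
      · filter_upwards [haeΩ] with x hx
        by_cases hxs : x ∈ {x | 0 < vL x}
        · simp only [Set.indicator_of_mem hxs]
          exact (hfpcontt x hx).mul continuousOn_const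
        · simp only [Set.indicator_of_notMem hxs]
          exact continuousOn_const
    exact (hAcont.mono (by rw [Set.uIcc_of_le hT.le]; exact Icc_subset_Ici_self)).intervalIntegrable
  have hBint : IntervalIntegrable B volume 0 T := by
    have hBeq : B = fun t => ∫ x, Set.indicator {x | vL x < 0}
        (fun x => fm t x * vL x) x ∂(volume.restrict Ω) := by
      funext t
      rw [hBdef]
      exact (MeasureTheory.integral_indicator hS2).symm
    have hBcont : ContinuousOn B (Set.Ici 0) := by
      rw [hBeq]
      apply MeasureTheory.continuousOn_of_dominated (bound := fun x => m * |vL x|)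
      · intro t ht
        exact (hfmmeas t ht).indicator hS2
      · intro t ht
        filter_upwards [haeΩ] with x hx
        calc ‖Set.indicator {x | vL x < 0} (fun x => fm t x * vL x) x‖
            ≤ ‖fm t x * vL x‖ := norm_indicator_le_norm_self _ _
          _ ≤ m * |vL x| := by
              rw [Real.norm_eq_abs, abs_mul]
              exact mul_le_mul_of_nonneg_right (hfmb t ht x hx) (abs_nonneg _)
      · exact hbint
      · filter_upwards [haeΩ] with x hx
        by_cases hxs : x ∈ {x | vL x < 0}
        · simp only [Set.indicator_of_mem hxs]
          exact (hfmcontt x hx).mul continuousOn_const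
        · simp only [Set.indicator_of_notMem hxs]
          exact continuousOn_const
    exact (hBcont.mono (by rw [Set.uIcc_of_le hT.le]; exact Icc_subset_Ici_self)).intervalIntegrable
  have hlimx : ∀ t ∈ Set.Ioc (0:ℝ) T,
      Tendsto (fun k => ⟪F t (uu (σ k)), vL⟫) atTop (𝓝 (A t + B t)) := by
    intro t ht
    have htpos : (0:ℝ) ≤ t := ht.1.le
    have heq : ∀ k, ⟪F t (uu (σ k)), vL⟫
        = ∫ x, f t x (uu (σ k) x) * vL x ∂(volume.restrict Ω) := by
      intro k
      rw [hinner]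
      apply MeasureTheory.integral_congr_ae
      filter_upwards [hF t htpos (uu (σ k))] with x hx
      rw [hx]
    have hlimeq : A t + B t = ∫ x, (Set.indicator {x | 0 < vL x} (fun x => fp t x * vL x) x
        + Set.indicator {x | vL x < 0} (fun x => fm t x * vL x) x) ∂(volume.restrict Ω) := by
      rw [MeasureTheory.integral_add ((hfpint t htpos).indicator hS1)
        ((hfmint t htpos).indicator hS2),
        MeasureTheory.integral_indicator hS1, MeasureTheory.integral_indicator hS2,
        hAdef, hBdef]
    rw [hlimeq]
    refine Tendsto.congr (fun k => (heq k).symm) ?_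
    apply MeasureTheory.tendsto_integral_filter_of_dominated_convergence
      (fun x => m * |vL x|)
    · filter_upwards with k
      exact (hmeasF t htpos (uu (σ k))).mul (Lp.aestronglyMeasurable vL)
    · filter_upwards with k
      filter_upwards [haeΩ] with x hx
      rw [Real.norm_eq_abs, abs_mul]
      exact mul_le_mul_of_nonneg_right (hfa t htpos x hx _) (abs_nonneg _)
    · exact hbint
    · filter_upwards [haeΩ, hae, haeU] with x hxΩ hxv hxu
      rcases lt_trichotomy (vL x) 0 with hneg | hzero | hpos
      · have hxmem : x ∈ {x | vL x < 0} := hneg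
        have hxnot : x ∉ {x | 0 < vL x} := by
          simp only [Set.mem_setOf_eq, not_lt]; exact hneg.le
        rw [Set.indicator_of_mem hxmem, Set.indicator_of_notMem hxnot, zero_add]
        have hU : Tendsto (fun k => uu (σ k) x) atTop atBot := by
          have h6 := Filter.Tendsto.atTop_mul_neg hneg hUt hxv
          exact h6.congr fun k => (hxu k).symm
        exact ((hfm t htpos x hxΩ).comp hU).mul_const (vL x)
      · have hxnot1 : x ∉ {x | 0 < vL x} := by
          simp only [Set.mem_setOf_eq, hzero]; exact lt_irrefl 0
        have hxnot2 : x ∉ {x | vL x < 0} := by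
          simp only [Set.mem_setOf_eq, hzero]; exact lt_irrefl 0
        rw [Set.indicator_of_notMem hxnot1, Set.indicator_of_notMem hxnot2, add_zero]
        simp only [hzero, mul_zero]
        exact tendsto_const_nhds
      · have hxmem : x ∈ {x | 0 < vL x} := hpos
        have hxnot : x ∉ {x | vL x < 0} := by
          simp only [Set.mem_setOf_eq, not_lt]; exact hpos.le
        rw [Set.indicator_of_mem hxmem, Set.indicator_of_notMem hxnot, add_zero]
        have hU : Tendsto (fun k => uu (σ k) x) atTop atTop := by
          have h6 := Filter.Tendsto.atTop_mul_pos hpos hUt hxv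
          exact h6.congr fun k => (hxu k).symm
        exact ((hfp t htpos x hxΩ).comp hU).mul_const (vL x)
  have hW : Tendsto (fun k => ∫ t in (0:ℝ)..T, ⟪F t (uu (σ k)), vL⟫) atTop
      (𝓝 (∫ t in (0:ℝ)..T, (A t + B t))) := by
    apply intervalIntegral.tendsto_integral_filter_of_dominated_convergence
      (fun _ : ℝ => m * Real.sqrt V)
    · filter_upwards with k
      apply ContinuousOn.aestronglyMeasurable ?_ measurableSet_uIoc
      apply (hFinnerContOn (uu (σ k)) vL).mono
      rw [Set.uIoc_of_le hT.le]
      exact fun t ht => ht.1.le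
    · filter_upwards with k
      filter_upwards with t
      intro ht
      rw [Set.uIoc_of_le hT.le] at ht
      calc ‖⟪F t (uu (σ k)), vL⟫‖
          ≤ ‖F t (uu (σ k))‖ * ‖vL‖ := norm_inner_le_norm _ _
        _ ≤ m * Real.sqrt V := by
            rw [hvLn, mul_one]; exact hFnorm t ht.1.le _
    · exact intervalIntegrable_const
    · filter_upwards with t
      intro ht
      rw [Set.uIoc_of_le hT.le] at ht
      exact hlimx t ht
  have hsplit : ∀ k, J (σ k) = (∫ t in (0:ℝ)..T, ⟪F t (uu (σ k)), vv (σ k) - vL⟫)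
      + ∫ t in (0:ℝ)..T, ⟪F t (uu (σ k)), vL⟫ := by
    intro k
    have h1 : ∀ t : ℝ, ⟪F t (uu (σ k)), vv (σ k)⟫
        = ⟪F t (uu (σ k)), vv (σ k) - vL⟫ + ⟪F t (uu (σ k)), vL⟫ := by
      intro t
      rw [← inner_add_right]
      congr 1
      abel
    calc J (σ k)
        = ∫ t in (0:ℝ)..T,
            (⟪F t (uu (σ k)), vv (σ k) - vL⟫ + ⟪F t (uu (σ k)), vL⟫) := by
          rw [hJdef]
          exact intervalIntegral.integral_congr fun t _ => h1 t
      _ = _ := intervalIntegral.integral_add (hFinnerInt _ _) (hFinnerInt _ _)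
  have hP1 : Tendsto (fun k => ∫ t in (0:ℝ)..T, ⟪F t (uu (σ k)), vv (σ k) - vL⟫)
      atTop (𝓝 0) := by
    have h0 : Tendsto (fun k => ‖vv (σ k) - vL‖) atTop (𝓝 0) :=
      tendsto_iff_norm_sub_tendsto_zero.mp hLpσ
    have hC : Tendsto (fun k => m * Real.sqrt V * ‖vv (σ k) - vL‖ * T) atTop (𝓝 0) := by
      have := (h0.const_mul (m * Real.sqrt V)).mul_const T
      simpa using this
    apply squeeze_zero_norm (fun k => ?_) hC
    have hb : ∀ t ∈ Set.uIoc (0:ℝ) T,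
        ‖⟪F t (uu (σ k)), vv (σ k) - vL⟫‖ ≤ m * Real.sqrt V * ‖vv (σ k) - vL‖ := by
      intro t ht
      rw [Set.uIoc_of_le hT.le] at ht
      calc ‖⟪F t (uu (σ k)), vv (σ k) - vL⟫‖
          ≤ ‖F t (uu (σ k))‖ * ‖vv (σ k) - vL‖ := norm_inner_le_norm _ _
        _ ≤ (m * Real.sqrt V) * ‖vv (σ k) - vL‖ :=
            mul_le_mul_of_nonneg_right (hFnorm t ht.1.le _) (norm_nonneg _)
    have := intervalIntegral.norm_integral_le_of_norm_le_const hb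
    rwa [sub_zero, abs_of_pos hT] at this
  have hJlim : Tendsto (fun k => J (σ k)) atTop (𝓝 (0 + ∫ t in (0:ℝ)..T, (A t + B t))) := by
    refine Tendsto.congr (fun k => (hsplit k).symm) (hP1.add hW)
  have hfinal : (0:ℝ) ≤ 0 + ∫ t in (0:ℝ)..T, (A t + B t) :=
    ge_of_tendsto' hJlim (fun k => hJnn (σ k))
  have hsum : ∫ t in (0:ℝ)..T, (A t + B t) = (∫ t in (0:ℝ)..T, A t) + ∫ t in (0:ℝ)..T, B t :=
    intervalIntegral.integral_add hAint hBint
  have hneg := hLL vL hvLN hvLn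
  rw [hsum] at hfinal
  rw [hAdef, hBdef] at hfinal
  simp only [zero_add] at hfinal
  linarith
end

section
/- Let X be a complex Banach space, T>0, and {S(t)}_{t≥0} a C0 semigroup on X. Let D⊆X be a linear subspace and A:D→X a linear map such that for every x∈D and t≥0: S(t)x∈D, A(S(t)x)=S(t)(Ax), and the map t↦S(t)x has (right) derivative −Ax at t=0. If {x∈D : Ax=0} = {x∈X : S(T)x=x}, then for every nonzero integer k there is no nonzero z∈D with Az = ((2kπ/T)·i)·z; that is, no number (2kπ/T)i with k∈ℤ, k≠0 is an eigenvalue of A. -/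
open MeasureTheory Set Filter Topology Bornology

/-- if the kernel of (the restriction to `D` of) the operator `A`
(where `-A` generates the `C₀` semigroup `S`, encoded by invariance of `D`,
commutation with `S(t)` and the right-derivative property at `0`) coincides with
the fixed point set of `S(T)`, then no number `(2kπ/T)i` with `k ∈ ℤ, k ≠ 0` is
an eigenvalue of `A`. -/
theorem statement18
    {X : Type*} [NormedAddCommGroup X] [NormedSpace ℂ X] [CompleteSpace X]
    (T : ℝ) (hT : 0 < T)
    (S : ℝ → X →L[ℂ] X)
    (hS0 : S 0 = 1)
    (hSadd : ∀ t s : ℝ, 0 ≤ t → 0 ≤ s → S (t + s) = (S t).comp (S s))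
    (hScont : ∀ x : X, ContinuousOn (fun t => S t x) (Set.Ici (0:ℝ)))
    (D : Submodule ℂ X) (A : X →ₗ[ℂ] X)
    (hDinv : ∀ x ∈ D, ∀ t : ℝ, 0 ≤ t → S t x ∈ D)
    (hAS : ∀ x ∈ D, ∀ t : ℝ, 0 ≤ t → A (S t x) = S t (A x))
    (hgen : ∀ x ∈ D, Filter.Tendsto (fun h : ℝ => h⁻¹ • (S h x - x))
      (nhdsWithin 0 (Set.Ioi 0)) (nhds (-(A x))))
    (hker : ∀ x : X, (x ∈ D ∧ A x = 0) ↔ S T x = x) :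
    ∀ k : ℤ, k ≠ 0 → ∀ z ∈ D,
      A z = (((2 * (k : ℂ) * Real.pi / (T : ℂ)) * Complex.I) : ℂ) • z → z = 0 := by
  intro k hk z hz hAz
  set lam : ℂ := (2 * (k : ℂ) * Real.pi / (T : ℂ)) * Complex.I with hlam
  have hTne : (T : ℂ) ≠ 0 := by exact_mod_cast hT.ne'
  -- the trajectory
  set g : ℝ → X := fun t => S t z with hg
  -- right derivative of g
  have hgderiv : ∀ t : ℝ, 0 ≤ t → HasDerivWithinAt g (-(lam • g t)) (Ici t) t := by
    intro t ht
    have hxD : S t z ∈ D := hDinv z hz t ht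
    have hAx : A (S t z) = lam • S t z := by
      rw [hAS z hz t ht, hAz, (S t).map_smul]
    have htend := hgen _ hxD
    rw [hAx] at htend
    rw [hasDerivWithinAt_iff_tendsto_slope]
    rw [Ici_sdiff_left]
    have hmap : Tendsto (fun y : ℝ => y - t) (𝓝[>] t) (𝓝[>] (0:ℝ)) := by
      apply tendsto_nhdsWithin_of_tendsto_nhds_of_eventually_within
      · have : Tendsto (fun y : ℝ => y - t) (𝓝 t) (𝓝 (t - t)) :=
          (continuous_sub_right t).tendsto t
        simpa using this.mono_left nhdsWithin_le_nhds
      · filter_upwards [self_mem_nhdsWithin] with y hy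
        simpa [sub_pos] using hy
    have := htend.comp hmap
    apply this.congr'
    filter_upwards [self_mem_nhdsWithin] with y hy
    have hy' : t < y := hy
    have : S y z = S (y - t) (S t z) := by
      have := hSadd (y - t) t (by linarith) ht
      rw [show y - t + t = y by ring] at this
      rw [this]; rfl
    simp [slope, g, Function.comp, this, vsub_eq_sub]
  -- the function f
  set c : ℝ → ℂ := fun t => Complex.exp (lam * t) with hc
  have hcderiv : ∀ t : ℝ, HasDerivAt c (lam * c t) t := by
    intro t
    have h1 : HasDerivAt (fun s : ℝ => lam * (s : ℂ)) lam t := by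
      simpa using (Complex.ofRealCLM.hasDerivAt (x := t)).const_mul lam
    simpa [hc, mul_comm, Function.comp_def] using (Complex.hasDerivAt_exp (lam * t)).comp t h1
  set f : ℝ → X := fun t => c t • g t with hf
  have hfderiv : ∀ t : ℝ, 0 ≤ t → HasDerivWithinAt f 0 (Ici t) t := by
    intro t ht
    have := ((hcderiv t).hasDerivWithinAt (s := Ici t)).smul (hgderiv t ht)
    have heq : c t • -(lam • g t) + (lam * c t) • g t = 0 := by
      rw [smul_neg, smul_smul, mul_comm (c t) lam, neg_add_cancel]
    rwa [heq] at this
  have hfcont : ContinuousOn f (Icc 0 T) := by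
    apply ContinuousOn.smul
    · exact (Complex.continuous_exp.comp (continuous_const.mul Complex.continuous_ofReal)).continuousOn
    · exact (hScont z).mono Icc_subset_Ici_self
  have hconst := constant_of_has_deriv_right_zero hfcont
    (fun x hx => hfderiv x hx.1) T (by constructor <;> [exact le_of_lt hT; rfl])
  -- compute f 0 and f T
  have hf0 : f 0 = z := by simp [hf, hc, hg, hS0]
  have hexpT : c T = 1 := by
    have : lam * T = (k : ℂ) * (2 * Real.pi * Complex.I) := by
      rw [hlam]; field_simp
    rw [hc]; dsimp only
    rw [this, Complex.exp_int_mul_two_pi_mul_I]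
  have hfix : S T z = z := by
    have := hconst
    rw [hf0] at this
    simpa [hf, hexpT, hg] using this
  have hAz0 : A z = 0 := ((hker z).mpr hfix).2
  rw [hAz0] at hAz
  have hlamne : lam ≠ 0 := by
    rw [hlam]
    apply mul_ne_zero _ Complex.I_ne_zero
    apply div_ne_zero _ hTne
    have hkne : (k : ℂ) ≠ 0 := Int.cast_ne_zero.mpr hk
    have hpi : (Real.pi : ℂ) ≠ 0 := by exact_mod_cast Real.pi_ne_zero
    exact mul_ne_zero (mul_ne_zero two_ne_zero hkne) hpi
  rcases (smul_eq_zero.mp hAz.symm) with h | h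
  · exact absurd h hlamne
  · exact h
end
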